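/- Let n, s ≥ 1. Let A be a nonnegative n×n real matrix, b and c nonnegative vectors in ℝⁿ, and d ≥ 0, and let M = [[A, b],[cᵀ, d]]. Let B be a nonnegative n×s matrix whose i-th row sum equals b_i for every i, let C be the s×n matrix each of whose rows equals cᵀ, and let D be a nonnegative s×s matrix all of whose row sums equal d; set M̃ = [[A, B],[C, D]]. Let ρ = ρ(M) be the spectral radius of M, and suppose (x, y) ∈ ℝⁿ × ℝ is nonnegative, nonzero, and satisfies (xᵀ, y) M = ρ (xᵀ, y). Then there exists a nonnegative vector ỹ ∈ ℝˢ with Σᵢ ỹᵢ = y such that (xᵀ, ỹᵀ) M̃ = ρ (xᵀ, ỹᵀ). -/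

import Mathlib

open Matrix Filter Topology

set_option maxHeartbeats 1000000

lemma cesaro_fixed {s : ℕ} (hs : 1 ≤ s) {ρ d y : ℝ} (hρ : 0 < ρ) (hy : 0 ≤ y)
    {w : Fin s → ℝ} (hw : ∀ j, 0 ≤ w j)
    {D : Matrix (Fin s) (Fin s) ℝ} (hD : ∀ i j, 0 ≤ D i j) (hDrow : ∀ i, ∑ j, D i j = d)
    (hsum : (∑ j, w j) + y * d = ρ * y) :
    ∃ z : Fin s → ℝ, (∀ i, 0 ≤ z i) ∧ (∑ i, z i) = y ∧
      ∀ j, w j + ∑ k, z k * D k j = ρ * z j := by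
  set T : (Fin s → ℝ) → (Fin s → ℝ) := fun u j => ρ⁻¹ * (w j + ∑ k, u k * D k j) with hT
  set K : Set (Fin s → ℝ) := {u | (∀ i, 0 ≤ u i) ∧ ∑ i, u i = y} with hK
  have hTsum : ∀ u : Fin s → ℝ, (∑ i, u i) = y → ∑ j, T u j = y := by
    intro u hu
    have : ∑ j, ∑ k, u k * D k j = y * d := by
      rw [Finset.sum_comm]
      have : ∀ k, ∑ j, u k * D k j = u k * d := by
        intro k; rw [← Finset.mul_sum, hDrow]
      simp only [this, ← Finset.sum_mul, hu]
    simp only [hT, ← Finset.mul_sum]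
    rw [Finset.sum_add_distrib, this, hsum]
    field_simp
  have hTK : ∀ u ∈ K, T u ∈ K := by
    intro u hu
    refine ⟨fun j => ?_, hTsum u hu.2⟩
    have : 0 ≤ w j + ∑ k, u k * D k j := by
      apply add_nonneg (hw j)
      exact Finset.sum_nonneg fun k _ => mul_nonneg (hu.1 k) (hD k j)
    exact mul_nonneg (inv_nonneg.mpr hρ.le) this
  have hTaff : ∀ (N : ℕ), 0 < N → ∀ v : ℕ → Fin s → ℝ,
      T ((N : ℝ)⁻¹ • ∑ m ∈ Finset.range N, v m) =
        (N : ℝ)⁻¹ • ∑ m ∈ Finset.range N, T (v m) := by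
    intro N hN v
    funext j
    have hN' : (N : ℝ) ≠ 0 := Nat.cast_ne_zero.mpr hN.ne'
    simp only [hT, Pi.smul_apply, smul_eq_mul, Finset.sum_apply]
    have e1 : ∑ k, ((N:ℝ)⁻¹ * ∑ m ∈ Finset.range N, v m k) * D k j
        = (N:ℝ)⁻¹ * ∑ m ∈ Finset.range N, ∑ k, v m k * D k j := by
      simp_rw [mul_assoc]
      rw [← Finset.mul_sum]
      congr 1
      simp_rw [Finset.sum_mul]
      exact Finset.sum_comm
    have e2 : ∑ m ∈ Finset.range N, ρ⁻¹ * (w j + ∑ k, v m k * D k j)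
        = ρ⁻¹ * ((N:ℝ) * w j + ∑ m ∈ Finset.range N, ∑ k, v m k * D k j) := by
      rw [← Finset.mul_sum, Finset.sum_add_distrib, Finset.sum_const,
        Finset.card_range, nsmul_eq_mul]
    rw [e1, e2]
    field_simp
  -- iterate and averages
  set u0 : Fin s → ℝ := fun _ => y / s with hu0
  have hu0K : u0 ∈ K := by
    constructor
    · intro i; exact div_nonneg hy (Nat.cast_nonneg s)
    · simp [hu0]
      field_simp
  set a : ℕ → (Fin s → ℝ) := fun N => T^[N] u0 with ha
  have haK : ∀ N, a N ∈ K := by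
    intro N
    induction N with
    | zero => simpa [ha] using hu0K
    | succ N ih =>
      have : a (N+1) = T (a N) := by simp [ha, Function.iterate_succ_apply']
      rw [this]; exact hTK _ ih
  set Av : ℕ → (Fin s → ℝ) := fun N => ((N:ℝ))⁻¹ • ∑ m ∈ Finset.range N, a m with hAv
  have hAvK : ∀ N : ℕ, 0 < N → Av N ∈ K := by
    intro N hN
    have hN' : (N : ℝ) ≠ 0 := Nat.cast_ne_zero.mpr hN.ne'
    constructor
    · intro i
      simp only [hAv, Pi.smul_apply, smul_eq_mul, Finset.sum_apply]
      exact mul_nonneg (inv_nonneg.mpr (Nat.cast_nonneg N))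
        (Finset.sum_nonneg fun m _ => (haK m).1 i)
    · simp only [hAv, Pi.smul_apply, smul_eq_mul, Finset.sum_apply]
      rw [← Finset.mul_sum, Finset.sum_comm]
      have : ∀ m ∈ Finset.range N, ∑ i, a m i = y := fun m _ => (haK m).2
      rw [Finset.sum_congr rfl this, Finset.sum_const, Finset.card_range, nsmul_eq_mul]
      field_simp
  have hTA : ∀ N : ℕ, 0 < N → T (Av N) = Av N + ((N:ℝ))⁻¹ • (a N - a 0) := by
    intro N hN
    have h1 : T (Av N) = ((N:ℝ))⁻¹ • ∑ m ∈ Finset.range N, T (a m) := hTaff N hN a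
    have h2 : ∀ m, T (a m) = a (m+1) := by
      intro m; simp [ha, Function.iterate_succ_apply']
    simp only [h2] at h1
    have h3 : ∑ m ∈ Finset.range N, a (m+1) = (∑ m ∈ Finset.range N, a m) + (a N - a 0) := by
      have := Finset.sum_range_succ' (fun m => a m) N
      have h4 := Finset.sum_range_succ (fun m => a m) N
      rw [h4] at this
      linear_combination -this
    rw [h1, h3, smul_add]
  -- compactness of K
  have hKsub : K ⊆ Set.Icc (0 : Fin s → ℝ) (fun _ => y) := by
    intro u hu
    constructor
    · intro i; exact hu.1 i
    · intro i
      calc u i ≤ ∑ k, u k := Finset.single_le_sum (fun k _ => hu.1 k) (Finset.mem_univ i)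
        _ = y := hu.2
  have hKclosed : IsClosed K := by
    have h1 : IsClosed {u : Fin s → ℝ | ∀ i, 0 ≤ u i} := by
      have : {u : Fin s → ℝ | ∀ i, 0 ≤ u i} = ⋂ i, {u | 0 ≤ u i} := by
        ext u; simp
      rw [this]
      exact isClosed_iInter fun i => isClosed_le continuous_const (continuous_apply i)
    have h2 : IsClosed {u : Fin s → ℝ | ∑ i, u i = y} :=
      isClosed_eq (continuous_finset_sum _ fun i _ => continuous_apply i) continuous_const
    exact h1.inter h2
  have hKcomp : IsCompact K :=
    (isCompact_Icc).of_isClosed_subset hKclosed hKsub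
  -- subsequence
  obtain ⟨z, hzK, φ, hφ, hconv⟩ := hKcomp.tendsto_subseq (fun i : ℕ => hAvK (i+1) (Nat.succ_pos i))
  -- continuity of T
  have hTcont : Continuous T := by
    apply continuous_pi
    intro j
    exact continuous_const.mul (continuous_const.add
      (continuous_finset_sum _ fun k _ => (continuous_apply k).mul continuous_const))
  -- the error term tends to 0
  have hbound : ∀ u ∈ K, ∀ v ∈ K, ‖u - v‖ ≤ y := by
    intro u hu v hv
    rw [pi_norm_le_iff_of_nonneg hy]
    intro i
    rw [Pi.sub_apply, Real.norm_eq_abs, abs_sub_le_iff]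
    have h1 := (hKsub hu).2 i
    have h2 := (hKsub hv).2 i
    have h3 := hu.1 i
    have h4 := hv.1 i
    constructor <;> linarith
  have hφat : Tendsto (fun i : ℕ => ((φ i + 1 : ℕ) : ℝ)⁻¹ * y) atTop (𝓝 0) := by
    have h0 : Tendsto φ atTop atTop := hφ.tendsto_atTop
    have h0' : Tendsto (fun i => φ i + 1) atTop atTop :=
      tendsto_atTop_mono (fun i => Nat.le_succ (φ i)) h0
    have h1 : Tendsto (fun i : ℕ => ((φ i + 1 : ℕ) : ℝ)) atTop atTop :=
      tendsto_natCast_atTop_atTop.comp h0'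
    have := (tendsto_inv_atTop_zero.comp h1).mul_const y
    simpa using this
  have herr : Tendsto (fun i : ℕ => ((φ i + 1 : ℕ) : ℝ)⁻¹ • (a (φ i + 1) - a 0)) atTop (𝓝 0) := by
    apply squeeze_zero_norm _ hφat
    intro i
    rw [norm_smul]
    have : ‖a (φ i + 1) - a 0‖ ≤ y := hbound _ (haK _) _ (haK _)
    have h2 : ‖(((φ i + 1 : ℕ) : ℝ))⁻¹‖ = ((φ i + 1 : ℕ) : ℝ)⁻¹ := by
      rw [Real.norm_eq_abs, abs_of_nonneg (inv_nonneg.mpr (Nat.cast_nonneg _))]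
    rw [h2]
    exact mul_le_mul_of_nonneg_left this (inv_nonneg.mpr (Nat.cast_nonneg _))
  -- limits
  have hlim1 : Tendsto (fun i : ℕ => T (Av (φ i + 1))) atTop (𝓝 (T z)) :=
    (hTcont.tendsto z).comp hconv
  have hlim2 : Tendsto (fun i : ℕ => T (Av (φ i + 1))) atTop (𝓝 z) := by
    have : (fun i : ℕ => T (Av (φ i + 1))) =
        fun i : ℕ => Av (φ i + 1) + ((φ i + 1 : ℕ) : ℝ)⁻¹ • (a (φ i + 1) - a 0) := by
      funext i
      rw [hTA _ (Nat.succ_pos _)]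
    rw [this]
    simpa using hconv.add herr
  have hfix : T z = z := tendsto_nhds_unique hlim1 hlim2
  refine ⟨z, hzK.1, hzK.2, fun j => ?_⟩
  have := congrFun hfix j
  simp only [hT] at this
  field_simp at this
  linarith [this]

/-- Spectral radius of a real square matrix: the maximum of the moduli of its
complex eigenvalues (elements of the spectrum of the matrix over `ℂ`). -/
noncomputable def specRad {n : Type*} [Fintype n] [DecidableEq n]
    (M : Matrix n n ℝ) : ℝ :=
  sSup ((fun z : ℂ => ‖z‖) '' spectrum ℂ (M.map (algebraMap ℝ ℂ)))

/-- A nonnegative nonzero left eigenvector `(x, y)` of `M = [[A, b], [cᵀ, d]]`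
for the spectral radius `ρ(M)` lifts to a left eigenvector `(x, ỹ)` of the row
sum expansion `M̃ = [[A, B], [C, D]]`, where `ỹ ≥ 0` and `Σᵢ ỹᵢ = y`. -/
theorem expansion_leftEigenvector_lifts
    {n s : ℕ} (hn : 1 ≤ n) (hs : 1 ≤ s)
    (A : Matrix (Fin n) (Fin n) ℝ) (b c : Fin n → ℝ) (d : ℝ)
    (hA : ∀ i j, 0 ≤ A i j) (hb : ∀ i, 0 ≤ b i) (hc : ∀ i, 0 ≤ c i) (hd : 0 ≤ d)
    (B : Matrix (Fin n) (Fin s) ℝ) (hB : ∀ i j, 0 ≤ B i j)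
    (hBrow : ∀ i, ∑ j, B i j = b i)
    (D : Matrix (Fin s) (Fin s) ℝ) (hD : ∀ i j, 0 ≤ D i j)
    (hDrow : ∀ i, ∑ j, D i j = d)
    (x : Fin n → ℝ) (y : ℝ) (hx : ∀ i, 0 ≤ x i) (hy : 0 ≤ y)
    (hne : Sum.elim x (fun _ : Fin 1 => y) ≠ 0)
    (heig : Matrix.vecMul (Sum.elim x (fun _ : Fin 1 => y))
        (Matrix.fromBlocks A
          (Matrix.of fun (i : Fin n) (_ : Fin 1) => b i)
          (Matrix.of fun (_ : Fin 1) (j : Fin n) => c j)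
          (Matrix.of fun (_ : Fin 1) (_ : Fin 1) => d)) =
      specRad (Matrix.fromBlocks A
          (Matrix.of fun (i : Fin n) (_ : Fin 1) => b i)
          (Matrix.of fun (_ : Fin 1) (j : Fin n) => c j)
          (Matrix.of fun (_ : Fin 1) (_ : Fin 1) => d)) •
        Sum.elim x (fun _ : Fin 1 => y)) :
    ∃ yt : Fin s → ℝ, (∀ i, 0 ≤ yt i) ∧ (∑ i, yt i) = y ∧
      Matrix.vecMul (Sum.elim x yt)
          (Matrix.fromBlocks A B
            (Matrix.of fun (_ : Fin s) (j : Fin n) => c j) D) =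
        specRad (Matrix.fromBlocks A
            (Matrix.of fun (i : Fin n) (_ : Fin 1) => b i)
            (Matrix.of fun (_ : Fin 1) (j : Fin n) => c j)
            (Matrix.of fun (_ : Fin 1) (_ : Fin 1) => d)) •
          Sum.elim x yt := by
  set ρ : ℝ := specRad (Matrix.fromBlocks A
          (Matrix.of fun (i : Fin n) (_ : Fin 1) => b i)
          (Matrix.of fun (_ : Fin 1) (j : Fin n) => c j)
          (Matrix.of fun (_ : Fin 1) (_ : Fin 1) => d)) with hρdef
  have hrow : ∀ j, (∑ i, x i * A i j) + y * c j = ρ * x j := by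
    intro j
    have := congrFun heig (Sum.inl j)
    simpa [Matrix.vecMul, dotProduct, Fintype.sum_sum_type] using this
  have hcol : (∑ i, x i * b i) + y * d = ρ * y := by
    have := congrFun heig (Sum.inr 0)
    simpa [Matrix.vecMul, dotProduct, Fintype.sum_sum_type] using this
  have hρ0 : 0 ≤ ρ := by
    obtain ⟨i, hi⟩ := Function.ne_iff.mp hne
    cases i with
    | inl i =>
      have hxi : 0 < x i := lt_of_le_of_ne (hx i) (Ne.symm (by simpa using hi))
      have h1 : 0 ≤ ρ * x i := by
        rw [← hrow i]
        exact add_nonneg (Finset.sum_nonneg fun k _ => mul_nonneg (hx k) (hA k i))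
          (mul_nonneg hy (hc i))
      nlinarith
    | inr i =>
      have hyi : 0 < y := lt_of_le_of_ne hy (Ne.symm (by simpa using hi))
      have h1 : 0 ≤ ρ * y := by
        rw [← hcol]
        exact add_nonneg (Finset.sum_nonneg fun k _ => mul_nonneg (hx k) (hb k))
          (mul_nonneg hy hd)
      nlinarith
  set w : Fin s → ℝ := fun j => ∑ i, x i * B i j with hwdef
  have hwnn : ∀ j, 0 ≤ w j := fun j => Finset.sum_nonneg fun i _ => mul_nonneg (hx i) (hB i j)
  have hwsum : ∑ j, w j = ∑ i, x i * b i := by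
    simp only [hwdef]
    rw [Finset.sum_comm]
    congr 1; funext i
    rw [← Finset.mul_sum, hBrow]
  suffices h : ∃ yt : Fin s → ℝ, (∀ i, 0 ≤ yt i) ∧ (∑ i, yt i) = y ∧
      ∀ j, w j + ∑ k, yt k * D k j = ρ * yt j by
    obtain ⟨yt, h1, h2, h3⟩ := h
    refine ⟨yt, h1, h2, ?_⟩
    funext i
    cases i with
    | inl j =>
      have e : ∑ k, yt k * c j = y * c j := by rw [← Finset.sum_mul, h2]
      have := hrow j
      simp only [Matrix.vecMul, dotProduct, Fintype.sum_sum_type,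
        Matrix.fromBlocks_apply₁₁, Matrix.fromBlocks_apply₂₁, Sum.elim_inl, Sum.elim_inr,
        Matrix.of_apply, Pi.smul_apply, smul_eq_mul]
      rw [e]
      linarith
    | inr j =>
      have := h3 j
      simp only [Matrix.vecMul, dotProduct, Fintype.sum_sum_type,
        Matrix.fromBlocks_apply₁₂, Matrix.fromBlocks_apply₂₂, Sum.elim_inl, Sum.elim_inr,
        Matrix.of_apply, Pi.smul_apply, smul_eq_mul]
      linarith
  rcases eq_or_lt_of_le hρ0 with hρ | hρ
  · -- ρ = 0
    have hcol0 : (∑ i, x i * b i) + y * d = 0 := by rw [hcol, ← hρ, zero_mul]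
    have h1 : 0 ≤ ∑ i, x i * b i := Finset.sum_nonneg fun i _ => mul_nonneg (hx i) (hb i)
    have h2 : 0 ≤ y * d := mul_nonneg hy hd
    have hxb : ∑ i, x i * b i = 0 := by linarith
    have hyd : y * d = 0 := by linarith
    have hw0 : ∀ j, w j = 0 := by
      have : ∑ j, w j = 0 := by rw [hwsum, hxb]
      intro j
      exact (Finset.sum_eq_zero_iff_of_nonneg (fun k _ => hwnn k)).mp this j (Finset.mem_univ j)
    rcases eq_or_lt_of_le hy with hy0 | hy0
    · exact ⟨0, fun i => le_refl 0, by simp [← hy0], fun j => by simp [hw0 j, ← hρ]⟩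
    · have hd0 : d = 0 := by
        rcases mul_eq_zero.mp hyd with h | h
        · exact absurd h.symm hy0.ne
        · exact h
      have hD0 : ∀ k j, D k j = 0 := by
        intro k j
        have : ∑ j, D k j = 0 := by rw [hDrow k, hd0]
        exact (Finset.sum_eq_zero_iff_of_nonneg (fun j _ => hD k j)).mp this j (Finset.mem_univ j)
      refine ⟨fun _ => y / s, fun i => div_nonneg hy (Nat.cast_nonneg s), ?_, fun j => ?_⟩
      · rw [Finset.sum_const, Finset.card_univ, Fintype.card_fin, nsmul_eq_mul]
        field_simp
      · simp [hw0 j, hD0, ← hρ]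
  · exact cesaro_fixed hs hρ hy hwnn hD hDrow (by rw [hwsum]; exact hcol)
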